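/- Let a, b > 0. The maximum over all weights w ≥ b/a of the length of the set {h < 0 : f'(w·h)·w ≥ 1} equals a·exp(−1), attained uniquely at w = exp(1)·b/a. -/

import Mathlib

open Real MeasureTheory

lemma pelu_log_le (t : ℝ) (ht : 0 < t) : Real.log t ≤ t * Real.exp (-1) := by
  have h := Real.log_le_sub_one_of_pos (mul_pos ht (Real.exp_pos (-1)))
  rw [Real.log_mul (ne_of_gt ht) (ne_of_gt (Real.exp_pos _)), Real.log_exp] at h
  linarith

lemma pelu_log_lt (t : ℝ) (ht : 0 < t) (hne : t ≠ Real.exp 1) :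
    Real.log t < t * Real.exp (-1) := by
  have hne' : t * Real.exp (-1) ≠ 1 := by
    intro h
    apply hne
    rw [Real.exp_neg] at h
    have := Real.exp_pos 1
    field_simp at h
    linarith
  have h := Real.log_lt_sub_one_of_pos (mul_pos ht (Real.exp_pos (-1))) hne'
  rw [Real.log_mul (ne_of_gt ht) (ne_of_gt (Real.exp_pos _)), Real.log_exp] at h
  linarith

lemma pelu_vol (a b w : ℝ) (ha : 0 < a) (hb : 0 < b) (hw : b / a ≤ w) :
    (MeasureTheory.volume
        {h : ℝ | h < 0 ∧ 1 ≤ w * (a / b) * Real.exp (w * h / b)}).toReal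
      = b / w * Real.log (w * a / b) := by
  have hw0 : 0 < w := lt_of_lt_of_le (div_pos hb ha) hw
  have hc0 : 0 < w * a / b := by positivity
  have hc1 : 1 ≤ w * a / b := by
    rw [le_div_iff₀ hb]
    have := (div_le_iff₀ ha).mp hw
    linarith
  have hlog : 0 ≤ Real.log (w * a / b) := Real.log_nonneg hc1
  have hset : {h : ℝ | h < 0 ∧ 1 ≤ w * (a / b) * Real.exp (w * h / b)} =
      Set.Ico (-(b / w * Real.log (w * a / b))) 0 := by
    ext h
    simp only [Set.mem_setOf_eq, Set.mem_Ico]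
    have key : 1 ≤ w * (a / b) * Real.exp (w * h / b) ↔
        -(b / w * Real.log (w * a / b)) ≤ h := by
      have h1 : w * (a / b) * Real.exp (w * h / b) =
          Real.exp (Real.log (w * a / b) + w * h / b) := by
        rw [Real.exp_add, Real.exp_log hc0]
        ring
      rw [h1, show (1:ℝ) = Real.exp 0 from (Real.exp_zero).symm, Real.exp_le_exp]
      have h6 : -(b / w * Real.log (w * a / b)) = -Real.log (w * a / b) * b / w := by
        ring
      constructor
      · intro hx
        have h5 : -Real.log (w * a / b) ≤ w * h / b := by linarith
        rw [le_div_iff₀ hb] at h5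
        rw [h6, div_le_iff₀ hw0]
        linarith
      · intro hx
        rw [h6, div_le_iff₀ hw0] at hx
        have h5 : -Real.log (w * a / b) ≤ w * h / b := by
          rw [le_div_iff₀ hb]; linarith
        linarith
    rw [key, and_comm]
  rw [hset, Real.volume_Ico, sub_neg_eq_add, zero_add,
    ENNReal.toReal_ofReal (by positivity)]

theorem pelu_max_interval_length (a b : ℝ) (ha : 0 < a) (hb : 0 < b) :
    (∀ w : ℝ, b / a ≤ w →
      (MeasureTheory.volume
        {h : ℝ | h < 0 ∧ 1 ≤ w * (a / b) * Real.exp (w * h / b)}).toReal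
        ≤ a * Real.exp (-1)) ∧
    (∀ w : ℝ, b / a ≤ w →
      ((MeasureTheory.volume
        {h : ℝ | h < 0 ∧ 1 ≤ w * (a / b) * Real.exp (w * h / b)}).toReal
        = a * Real.exp (-1) ↔ w = Real.exp 1 * (b / a))) := by
  have key : ∀ w : ℝ, b / a ≤ w → 0 < w ∧
      (MeasureTheory.volume
        {h : ℝ | h < 0 ∧ 1 ≤ w * (a / b) * Real.exp (w * h / b)}).toReal
        = b / w * Real.log (w * a / b) := by
    intro w hw
    exact ⟨lt_of_lt_of_le (div_pos hb ha) hw, pelu_vol a b w ha hb hw⟩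
  constructor
  · intro w hw
    obtain ⟨hw0, hv⟩ := key w hw
    rw [hv]
    have hc0 : 0 < w * a / b := by positivity
    have h1 := pelu_log_le (w * a / b) hc0
    have h2 : b / w * Real.log (w * a / b) ≤ b / w * (w * a / b * Real.exp (-1)) :=
      mul_le_mul_of_nonneg_left h1 (by positivity)
    have h3 : b / w * (w * a / b * Real.exp (-1)) = a * Real.exp (-1) := by
      field_simp
    linarith
  · intro w hw
    obtain ⟨hw0, hv⟩ := key w hw
    rw [hv]
    constructor
    · intro heq
      by_contra hne
      have hc0 : 0 < w * a / b := by positivity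
      have hcne : w * a / b ≠ Real.exp 1 := by
        intro h
        apply hne
        field_simp at h ⊢
        linarith
      have h1 := pelu_log_lt (w * a / b) hc0 hcne
      have h2 : b / w * Real.log (w * a / b) < b / w * (w * a / b * Real.exp (-1)) :=
        (mul_lt_mul_iff_right₀ (by positivity)).mpr h1
      have h3 : b / w * (w * a / b * Real.exp (-1)) = a * Real.exp (-1) := by
        field_simp
      linarith
    · intro heq
      subst heq
      have he : Real.exp 1 * (b / a) * a / b = Real.exp 1 := by
        field_simp
      rw [he, Real.log_exp, Real.exp_neg]
      have h0 : (0:ℝ) < Real.exp 1 := Real.exp_pos 1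
      field_simp
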